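/- arXiv:1006.0277 — 8 statements merged into one kernel-verified Lean document; each statement's English description precedes it below -/
import Mathlib

section
/- Let 0 < p ≤ 1 and let S_ρ(x) denote the sum of the ⌈ρm⌉ largest values among |x_1|^p, ..., |x_m|^p for x ∈ ℝ^m. Then for any x, x' ∈ ℝ^m, |S_ρ(x) − S_ρ(x')| ≤ ∑_{i=1}^m |x_i − x'_i|^p. -/
/-- `Srho p k x` is the sum of the `k` largest values among `|x i| ^ p`,
expressed as the supremum over all subsets of cardinality `k` of the sum over the subset. -/
noncomputable def Srho (p : ℝ) (k : ℕ) {m : ℕ} (x : Fin m → ℝ) : ℝ :=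
  sSup {s : ℝ | ∃ T : Finset (Fin m), T.card = k ∧ s = ∑ i ∈ T, |x i| ^ p}

private lemma rpow_add_le_real {p a b : ℝ} (hp0 : 0 ≤ p) (hp1 : p ≤ 1)
    (ha : 0 ≤ a) (hb : 0 ≤ b) : (a + b) ^ p ≤ a ^ p + b ^ p := by
  have h := NNReal.rpow_add_le_add_rpow a.toNNReal b.toNNReal hp0 hp1
  have := (NNReal.coe_le_coe.mpr h)
  simpa [NNReal.coe_rpow, Real.coe_toNNReal _ ha, Real.coe_toNNReal _ hb,
    Real.coe_toNNReal _ (add_nonneg ha hb)] using this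

private lemma key_pt {p : ℝ} (hp0 : 0 < p) (hp1 : p ≤ 1) (a b : ℝ) :
    |a| ^ p ≤ |b| ^ p + |a - b| ^ p := by
  have h1 : |a| ≤ |b| + |a - b| := by
    have := abs_sub_abs_le_abs_sub a b
    linarith
  calc |a| ^ p ≤ (|b| + |a - b|) ^ p :=
        Real.rpow_le_rpow (abs_nonneg a) h1 hp0.le
    _ ≤ |b| ^ p + |a - b| ^ p :=
        rpow_add_le_real hp0.le hp1 (abs_nonneg b) (abs_nonneg _)

private lemma srho_bddAbove (p : ℝ) (k : ℕ) {m : ℕ} (x : Fin m → ℝ) :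
    BddAbove {s : ℝ | ∃ T : Finset (Fin m), T.card = k ∧ s = ∑ i ∈ T, |x i| ^ p} := by
  have : {s : ℝ | ∃ T : Finset (Fin m), T.card = k ∧ s = ∑ i ∈ T, |x i| ^ p} ⊆
      (fun T : Finset (Fin m) => ∑ i ∈ T, |x i| ^ p) '' Set.univ := by
    rintro s ⟨T, _, rfl⟩; exact ⟨T, trivial, rfl⟩
  exact (Set.Finite.image _ Set.finite_univ).bddAbove.mono this

private lemma srho_le {p : ℝ} (hp0 : 0 < p) (hp1 : p ≤ 1) (k : ℕ) {m : ℕ}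
    (hk : k ≤ m) (x x' : Fin m → ℝ) :
    Srho p k x ≤ Srho p k x' + ∑ i, |x i - x' i| ^ p := by
  obtain ⟨T₀, -, hT₀⟩ := Finset.exists_subset_card_eq (s := (Finset.univ : Finset (Fin m))) (n := k)
    (by simpa using hk)
  apply Real.sSup_le
  · rintro s ⟨T, hT, rfl⟩
    have h1 : ∑ i ∈ T, |x i| ^ p ≤ ∑ i ∈ T, |x' i| ^ p + ∑ i ∈ T, |x i - x' i| ^ p := by
      rw [← Finset.sum_add_distrib]
      exact Finset.sum_le_sum fun i _ => key_pt hp0 hp1 (x i) (x' i)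
    have h2 : ∑ i ∈ T, |x' i| ^ p ≤ Srho p k x' :=
      le_csSup (srho_bddAbove p k x') ⟨T, hT, rfl⟩
    have h3 : ∑ i ∈ T, |x i - x' i| ^ p ≤ ∑ i, |x i - x' i| ^ p :=
      Finset.sum_le_sum_of_subset_of_nonneg (Finset.subset_univ T)
        (fun i _ _ => Real.rpow_nonneg (abs_nonneg _) p)
    linarith
  · have h2 : ∑ i ∈ T₀, |x' i| ^ p ≤ Srho p k x' :=
      le_csSup (srho_bddAbove p k x') ⟨T₀, hT₀, rfl⟩
    have h4 : (0:ℝ) ≤ ∑ i ∈ T₀, |x' i| ^ p :=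
      Finset.sum_nonneg fun i _ => Real.rpow_nonneg (abs_nonneg _) p
    have h3 : (0:ℝ) ≤ ∑ i, |x i - x' i| ^ p :=
      Finset.sum_nonneg fun i _ => Real.rpow_nonneg (abs_nonneg _) p
    linarith

theorem stmt_3 (p ρ : ℝ) (hp0 : 0 < p) (hp1 : p ≤ 1) (hρ0 : 0 < ρ) (hρ1 : ρ ≤ 1)
    (m : ℕ) (x x' : Fin m → ℝ) :
    |Srho p ⌈ρ * m⌉₊ x - Srho p ⌈ρ * m⌉₊ x'| ≤ ∑ i, |x i - x' i| ^ p := by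
  have hk : ⌈ρ * m⌉₊ ≤ m := by
    have : ρ * m ≤ (m : ℝ) := by nlinarith [Nat.cast_nonneg (α := ℝ) m]
    calc ⌈ρ * m⌉₊ ≤ ⌈(m : ℝ)⌉₊ := Nat.ceil_le_ceil this
      _ = m := Nat.ceil_natCast m
  rw [abs_sub_le_iff]
  constructor
  · have := srho_le hp0 hp1 _ hk x x'
    linarith
  · have := srho_le hp0 hp1 _ hk x' x
    have heq : ∑ i, |x' i - x i| ^ p = ∑ i, |x i - x' i| ^ p := by
      apply Finset.sum_congr rfl; intro i _; rw [abs_sub_comm]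
    linarith
end

section
/- Let 0 < p ≤ 1, S_ρ as above. If x, x' ∈ ℝ^m satisfy ‖x − x'‖_2 ≤ t, then |S_ρ(x) − S_ρ(x')| ≤ m^{1−p/2} t^p. -/
open Finset

lemma real_rpow_add_le {p : ℝ} (hp0 : 0 ≤ p) (hp1 : p ≤ 1) {a b : ℝ} (ha : 0 ≤ a) (hb : 0 ≤ b) :
    (a + b) ^ p ≤ a ^ p + b ^ p := by
  lift a to NNReal using ha
  lift b to NNReal using hb
  have := NNReal.rpow_add_le_add_rpow a b hp0 hp1
  exact_mod_cast this

lemma abs_rpow_sub_le {p : ℝ} (hp0 : 0 ≤ p) (hp1 : p ≤ 1) (a b : ℝ) :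
    |a| ^ p - |b| ^ p ≤ |a - b| ^ p := by
  have h1 : |a| ≤ |a - b| + |b| := by
    have := abs_sub_abs_le_abs_sub a b
    linarith
  have h2 : |a| ^ p ≤ (|a - b| + |b|) ^ p :=
    Real.rpow_le_rpow (abs_nonneg _) h1 hp0
  have h3 := real_rpow_add_le hp0 hp1 (abs_nonneg (a - b)) (abs_nonneg b)
  linarith

lemma Srho_bddAbove (p : ℝ) (hp : 0 ≤ p) (k : ℕ) {m : ℕ} (x : Fin m → ℝ) :
    BddAbove {s : ℝ | ∃ T : Finset (Fin m), T.card = k ∧ s = ∑ i ∈ T, |x i| ^ p} := by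
  refine ⟨∑ i, |x i| ^ p, ?_⟩
  rintro s ⟨T, hT, rfl⟩
  exact Finset.sum_le_sum_of_subset_of_nonneg (Finset.subset_univ T)
    (fun i _ _ => Real.rpow_nonneg (abs_nonneg _) p)

lemma Srho_le (p : ℝ) (hp : 0 ≤ p) (hp1 : p ≤ 1) (k : ℕ) {m : ℕ} (hk : k ≤ m)
    (x x' : Fin m → ℝ) :
    Srho p k x ≤ Srho p k x' + ∑ i, |x i - x' i| ^ p := by
  obtain ⟨T₀, _, hT₀⟩ := Finset.exists_subset_card_eq (by simpa using hk :
    k ≤ (Finset.univ : Finset (Fin m)).card)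
  refine csSup_le ⟨∑ i ∈ T₀, |x i| ^ p, T₀, hT₀, rfl⟩ ?_
  rintro s ⟨T, hT, rfl⟩
  have h1 : ∑ i ∈ T, |x' i| ^ p ≤ Srho p k x' :=
    le_csSup (Srho_bddAbove p hp k x') ⟨T, hT, rfl⟩
  have h2 : ∑ i ∈ T, (|x i| ^ p - |x' i| ^ p) ≤ ∑ i, |x i - x' i| ^ p := by
    calc ∑ i ∈ T, (|x i| ^ p - |x' i| ^ p) ≤ ∑ i ∈ T, |x i - x' i| ^ p :=
          Finset.sum_le_sum fun i _ => abs_rpow_sub_le hp hp1 _ _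
      _ ≤ ∑ i, |x i - x' i| ^ p :=
          Finset.sum_le_sum_of_subset_of_nonneg (Finset.subset_univ T)
            (fun i _ _ => Real.rpow_nonneg (abs_nonneg _) p)
  have := Finset.sum_sub_distrib (s := T) (f := fun i => |x i| ^ p) (g := fun i => |x' i| ^ p)
  rw [this] at h2
  linarith

theorem stmt_4 (p ρ t : ℝ) (hp0 : 0 < p) (hp1 : p ≤ 1) (hρ0 : 0 < ρ) (hρ1 : ρ ≤ 1)
    (ht : 0 ≤ t) (m : ℕ) (x x' : Fin m → ℝ)
    (hdist : Real.sqrt (∑ i, (x i - x' i) ^ 2) ≤ t) :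
    |Srho p ⌈ρ * m⌉₊ x - Srho p ⌈ρ * m⌉₊ x'| ≤ (m : ℝ) ^ (1 - p / 2) * t ^ p := by
  set k := ⌈ρ * m⌉₊
  have hk : k ≤ m := by
    apply Nat.ceil_le.mpr
    calc ρ * m ≤ 1 * m := by
          apply mul_le_mul_of_nonneg_right hρ1 (Nat.cast_nonneg m)
      _ = (m : ℝ) := one_mul _
  set D : ℝ := ∑ i, |x i - x' i| ^ p with hD
  have habs : |Srho p k x - Srho p k x'| ≤ D := by
    rw [abs_sub_le_iff]
    constructor
    · have := Srho_le p hp0.le hp1 k hk x x'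
      linarith
    · have := Srho_le p hp0.le hp1 k hk x' x
      have heq : ∑ i, |x' i - x i| ^ p = D := by
        rw [hD]; congr 1; ext i; rw [abs_sub_comm]
      rw [heq] at this
      linarith
  -- Now bound D
  rcases Nat.eq_zero_or_pos m with hm | hm
  · subst hm
    have : D = 0 := by simp [hD]
    rw [this] at habs
    have h2 : (0:ℝ) ≤ ((0:ℕ) : ℝ) ^ (1 - p / 2) * t ^ p := by positivity
    simpa using habs.trans h2
  have hmpos : (0:ℝ) < m := Nat.cast_pos.mpr hm
  set S : ℝ := ∑ i, (x i - x' i) ^ 2 with hS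
  have hSnn : 0 ≤ S := Finset.sum_nonneg fun i _ => sq_nonneg _
  -- power mean inequality
  have hq : (1:ℝ) ≤ 2 / p := by
    rw [le_div_iff₀ hp0]; linarith
  have key := Real.arith_mean_le_rpow_mean (Finset.univ) (fun _ : Fin m => 1 / (m:ℝ))
    (fun i => |x i - x' i| ^ p)
    (fun i _ => by positivity)
    (by rw [Finset.sum_const]; simp; field_simp)
    (fun i _ => Real.rpow_nonneg (abs_nonneg _) p) hq
  have hzpow : ∀ i : Fin m, (|x i - x' i| ^ p) ^ (2 / p) = (x i - x' i) ^ 2 := by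
    intro i
    rw [← Real.rpow_mul (abs_nonneg _)]
    have : p * (2 / p) = 2 := by field_simp
    rw [this]
    rw [show (2:ℝ) = ((2:ℕ):ℝ) by norm_num, Real.rpow_natCast, sq_abs]
  simp only [hzpow] at key
  rw [← Finset.mul_sum, ← Finset.mul_sum, ← hD, ← hS, one_div_div] at key
  have hmul : ((1 / (m:ℝ)) * S) ^ (p / 2) = (1 / (m:ℝ)) ^ (p / 2) * S ^ (p / 2) :=
    Real.mul_rpow (by positivity) hSnn
  rw [hmul] at key
  have hDle : D ≤ (m:ℝ) ^ (1 - p / 2) * S ^ (p / 2) := by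
    have h1 : D = (m:ℝ) * ((1 / (m:ℝ)) * D) := by field_simp
    have h2 : (m:ℝ) * ((1 / (m:ℝ)) ^ (p / 2) * S ^ (p / 2))
        = (m:ℝ) ^ (1 - p / 2) * S ^ (p / 2) := by
      rw [one_div, Real.inv_rpow (Nat.cast_nonneg m)]
      rw [Real.rpow_sub hmpos, Real.rpow_one]
      field_simp
    calc D = (m:ℝ) * ((1 / (m:ℝ)) * D) := h1
      _ ≤ (m:ℝ) * ((1 / (m:ℝ)) ^ (p / 2) * S ^ (p / 2)) :=
          mul_le_mul_of_nonneg_left key hmpos.le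
      _ = (m:ℝ) ^ (1 - p / 2) * S ^ (p / 2) := h2
  have hSt : S ^ (p / 2) ≤ t ^ p := by
    have h1 : S ^ (p / 2) = (Real.sqrt S) ^ p := by
      rw [Real.sqrt_eq_rpow, ← Real.rpow_mul hSnn]
      ring_nf
    rw [h1]
    exact Real.rpow_le_rpow (Real.sqrt_nonneg _) hdist hp0.le
  calc |Srho p k x - Srho p k x'| ≤ D := habs
    _ ≤ (m:ℝ) ^ (1 - p / 2) * S ^ (p / 2) := hDle
    _ ≤ (m:ℝ) ^ (1 - p / 2) * t ^ p :=
        mul_le_mul_of_nonneg_left hSt (Real.rpow_nonneg hmpos.le _)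
end

section
/- Let A be an m×n real matrix, 0 < p ≤ 1, and ρ ∈ (0,1). Suppose for every nonzero z ∈ ℝ^n and every set T ⊆ {1,...,m} with |T| ≤ ρm, we have ∑_{i∈T} |(Az)_i|^p < ∑_{i∈T^c} |(Az)_i|^p. Then for every f ∈ ℝ^n and every e ∈ ℝ^m with support of size at most ρm, f is the unique minimizer over x ∈ ℝ^n of ∑_{i=1}^m |(Af + e − Ax)_i|^p. -/
lemma rpow_abs_add_le {p : ℝ} (hp0 : 0 < p) (hp1 : p ≤ 1) (a b : ℝ) :
    |a + b| ^ p ≤ |a| ^ p + |b| ^ p := by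
  have h1 : |a + b| ^ p ≤ (|a| + |b|) ^ p :=
    Real.rpow_le_rpow (abs_nonneg _) (abs_add_le a b) hp0.le
  have h2 := NNReal.rpow_add_le_add_rpow ‖a‖₊ ‖b‖₊ hp0.le hp1
  have h3 : ((‖a‖₊ + ‖b‖₊ : NNReal) : ℝ) ^ p ≤ (‖a‖₊ : ℝ) ^ p + (‖b‖₊ : ℝ) ^ p := by
    rw [← NNReal.coe_rpow, ← NNReal.coe_rpow, ← NNReal.coe_rpow]
    exact_mod_cast h2
  simpa [Real.norm_eq_abs, coe_nnnorm] using h1.trans h3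

theorem stmt_5 (m n : ℕ) (A : Matrix (Fin m) (Fin n) ℝ) (p ρ : ℝ)
    (hp0 : 0 < p) (hp1 : p ≤ 1) (hρ0 : 0 < ρ) (hρ1 : ρ < 1)
    (hNSP : ∀ z : Fin n → ℝ, z ≠ 0 → ∀ T : Finset (Fin m), (T.card : ℝ) ≤ ρ * m →
      ∑ i ∈ T, |A.mulVec z i| ^ p < ∑ i ∈ Tᶜ, |A.mulVec z i| ^ p) :
    ∀ (f : Fin n → ℝ) (e : Fin m → ℝ),
      ((Finset.univ.filter (fun i => e i ≠ 0)).card : ℝ) ≤ ρ * m →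
      ∀ x : Fin n → ℝ, x ≠ f →
        ∑ i, |e i| ^ p < ∑ i, |A.mulVec f i + e i - A.mulVec x i| ^ p := by
  intro f e he x hx
  set z := f - x with hz
  have hzne : z ≠ 0 := sub_ne_zero.mpr (Ne.symm hx)
  have hAz : ∀ i, A.mulVec f i + e i - A.mulVec x i = A.mulVec z i + e i := by
    intro i
    have : A.mulVec z = A.mulVec f - A.mulVec x := by
      rw [hz, A.mulVec_sub]
    rw [this]; simp; ring
  set T : Finset (Fin m) := Finset.univ.filter (fun i => e i ≠ 0) with hT
  have hNSP' := hNSP z hzne T he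
  -- split sums over T and Tᶜ
  have hsplit : ∀ (g : Fin m → ℝ), ∑ i, g i = ∑ i ∈ T, g i + ∑ i ∈ Tᶜ, g i := by
    intro g
    rw [Finset.sum_add_sum_compl]
  have heT : ∑ i, |e i| ^ p = ∑ i ∈ T, |e i| ^ p := by
    rw [hsplit fun i => |e i| ^ p]
    have : ∑ i ∈ Tᶜ, |e i| ^ p = 0 := by
      apply Finset.sum_eq_zero
      intro i hi
      have : e i = 0 := by
        simp [hT, Finset.mem_compl, Finset.mem_filter] at hi
        exact hi
      simp [this, Real.zero_rpow hp0.ne']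
    rw [this, add_zero]
  calc ∑ i, |e i| ^ p = ∑ i ∈ T, |e i| ^ p := heT
    _ ≤ ∑ i ∈ T, (|A.mulVec z i + e i| ^ p + |A.mulVec z i| ^ p) := by
        apply Finset.sum_le_sum
        intro i _
        have := rpow_abs_add_le hp0 hp1 (A.mulVec z i + e i) (-(A.mulVec z i))
        simpa using this
    _ = ∑ i ∈ T, |A.mulVec z i + e i| ^ p + ∑ i ∈ T, |A.mulVec z i| ^ p := by
        rw [Finset.sum_add_distrib]
    _ < ∑ i ∈ T, |A.mulVec z i + e i| ^ p + ∑ i ∈ Tᶜ, |A.mulVec z i| ^ p := by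
        linarith
    _ ≤ ∑ i ∈ T, |A.mulVec z i + e i| ^ p + ∑ i ∈ Tᶜ, |A.mulVec z i + e i| ^ p := by
        apply add_le_add_right
        apply Finset.sum_le_sum
        intro i hi
        have hei : e i = 0 := by
          simp [hT, Finset.mem_compl, Finset.mem_filter] at hi
          exact hi
        simp [hei]
    _ = ∑ i, |A.mulVec z i + e i| ^ p := (hsplit _).symm
    _ = ∑ i, |A.mulVec f i + e i - A.mulVec x i| ^ p := by
        apply Finset.sum_congr rfl
        intro i _
        rw [hAz i]
end

section
/- Let A be an m×n real matrix, 0 < p ≤ 1, and ρ ∈ (0,1). Suppose there exist a nonzero z ∈ ℝ^n and a set T with |T| ≤ ρm such that ∑_{i∈T} |(Az)_i|^p > ∑_{i∈T^c} |(Az)_i|^p. Then there exist f ∈ ℝ^n and an error vector e supported on T such that f is not the unique minimizer of x ↦ ∑_i |(Af + e − Ax)_i|^p. -/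
theorem stmt_6 (m n : ℕ) (A : Matrix (Fin m) (Fin n) ℝ) (p ρ : ℝ)
    (hp0 : 0 < p) (hp1 : p ≤ 1) (hρ0 : 0 < ρ) (hρ1 : ρ < 1)
    (z : Fin n → ℝ) (hz : z ≠ 0) (T : Finset (Fin m)) (hT : (T.card : ℝ) ≤ ρ * m)
    (hfail : ∑ i ∈ T, |A.mulVec z i| ^ p > ∑ i ∈ Tᶜ, |A.mulVec z i| ^ p) :
    ∃ (f : Fin n → ℝ) (e : Fin m → ℝ),
      (∀ i ∉ T, e i = 0) ∧
      ∃ x : Fin n → ℝ, x ≠ f ∧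
        ∑ i, |A.mulVec f i + e i - A.mulVec x i| ^ p ≤ ∑ i, |e i| ^ p := by
  refine ⟨0, fun i => if i ∈ T then A.mulVec z i else 0, ?_, z, hz, ?_⟩
  · intro i hi; simp [hi]
  have h0 : A.mulVec (0 : Fin n → ℝ) = 0 := Matrix.mulVec_zero A
  have hzp : (0 : ℝ) ^ p = 0 := Real.zero_rpow hp0.ne'
  have hL : ∀ i, |A.mulVec (0:Fin n → ℝ) i + (if i ∈ T then A.mulVec z i else 0) - A.mulVec z i| ^ p
      = if i ∈ T then 0 else |A.mulVec z i| ^ p := by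
    intro i
    by_cases hi : i ∈ T <;> simp [hi, h0, hzp, abs_neg]
  have hR : ∀ i, |(if i ∈ T then A.mulVec z i else 0 : ℝ)| ^ p
      = if i ∈ T then |A.mulVec z i| ^ p else 0 := by
    intro i
    by_cases hi : i ∈ T <;> simp [hi, hzp]
  simp only [hL, hR, Finset.sum_ite_mem, Finset.univ_inter]
  have : Finset.filter (fun x => x ∉ T) Finset.univ = Tᶜ := by ext i; simp
  rw [Finset.sum_ite, Finset.sum_const_zero, zero_add, this]; exact hfail.le
end

section
/- If the null-space condition ∑_{i∈T} |(Az)_i|^p < ∑_{i∈T^c} |(Az)_i|^p holds for all nonzero z ∈ ℝ^n and all |T| ≤ ρm for some p ∈ (0,1], then it also holds for every q with 0 < q ≤ p. -/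
theorem stmt_7 (m n : ℕ) (A : Matrix (Fin m) (Fin n) ℝ) (p ρ : ℝ)
    (hp0 : 0 < p) (hp1 : p ≤ 1) (hρ0 : 0 < ρ)
    (hker : ∀ z : Fin n → ℝ, A.mulVec z = 0 → z = 0)
    (hNSP : ∀ z : Fin n → ℝ, z ≠ 0 → ∀ T : Finset (Fin m), (T.card : ℝ) ≤ ρ * m →
      ∑ i ∈ T, |A.mulVec z i| ^ p < ∑ i ∈ Tᶜ, |A.mulVec z i| ^ p) :
    ∀ q : ℝ, 0 < q → q ≤ p →
      ∀ z : Fin n → ℝ, z ≠ 0 → ∀ T : Finset (Fin m), (T.card : ℝ) ≤ ρ * m →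
        ∑ i ∈ T, |A.mulVec z i| ^ q < ∑ i ∈ Tᶜ, |A.mulVec z i| ^ q := by
  intro q hq0 hqp z hz T hT
  set a : Fin m → ℝ := fun i => |A.mulVec z i| with ha_def
  have ha : ∀ i, 0 ≤ a i := fun i => abs_nonneg _
  -- find the maximizing set T' of the same cardinality
  have hmemS : T ∈ Finset.powersetCard T.card (Finset.univ : Finset (Fin m)) := by
    simp [Finset.mem_powersetCard]
  obtain ⟨T', hT'mem, hT'max⟩ :=
    Finset.exists_max_image (Finset.powersetCard T.card (Finset.univ : Finset (Fin m)))
      (fun U => ∑ i ∈ U, a i ^ q) ⟨T, hmemS⟩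
  have hT'card : T'.card = T.card := (Finset.mem_powersetCard.1 hT'mem).2
  -- reduce to T'
  have hTle : ∑ i ∈ T, a i ^ q ≤ ∑ i ∈ T', a i ^ q := hT'max T hmemS
  have htot : ∀ U : Finset (Fin m), ∑ i ∈ U, a i ^ q + ∑ i ∈ Uᶜ, a i ^ q
      = ∑ i : Fin m, a i ^ q := fun U => Finset.sum_add_sum_compl U _
  have hcompl : ∑ i ∈ T'ᶜ, a i ^ q ≤ ∑ i ∈ Tᶜ, a i ^ q := by
    have h1 := htot T
    have h2 := htot T'
    linarith
  suffices h : ∑ i ∈ T', a i ^ q < ∑ i ∈ T'ᶜ, a i ^ q by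
    calc ∑ i ∈ T, a i ^ q ≤ ∑ i ∈ T', a i ^ q := hTle
      _ < ∑ i ∈ T'ᶜ, a i ^ q := h
      _ ≤ ∑ i ∈ Tᶜ, a i ^ q := hcompl
  have hNSP' : ∑ i ∈ T', a i ^ p < ∑ i ∈ T'ᶜ, a i ^ p := by
    apply hNSP z hz T'
    rw [hT'card]; exact hT
  -- boundary property: for i ∈ T', j ∉ T', a j ≤ a i
  have hbd : ∀ i ∈ T', ∀ j ∈ T'ᶜ, a j ≤ a i := by
    intro i hi j hj
    rw [Finset.mem_compl] at hj
    by_contra hlt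
    push_neg at hlt
    have hne : j ∉ T'.erase i := fun h => hj (Finset.mem_of_mem_erase h)
    set U := insert j (T'.erase i) with hU
    have hUmem : U ∈ Finset.powersetCard T.card (Finset.univ : Finset (Fin m)) := by
      rw [Finset.mem_powersetCard]
      constructor
      · intro x _; exact Finset.mem_univ x
      · rw [Finset.card_insert_of_notMem hne, Finset.card_erase_of_mem hi, hT'card]
        have : 1 ≤ T.card := by rw [← hT'card]; exact Finset.card_pos.2 ⟨i, hi⟩
        omega
    have hUsum : ∑ x ∈ U, a x ^ q = ∑ x ∈ T', a x ^ q - a i ^ q + a j ^ q := by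
      rw [hU, Finset.sum_insert hne, Finset.sum_erase_eq_sub hi]; ring
    have := hT'max U hUmem
    rw [hUsum] at this
    have hiq : a i ^ q < a j ^ q := Real.rpow_lt_rpow (ha i) hlt hq0
    linarith
  rcases T'.eq_empty_or_nonempty with hemp | hne
  · -- T' empty : RHS positive since Az ≠ 0
    subst hemp
    simp only [Finset.sum_empty]
    have hAz : A.mulVec z ≠ 0 := fun h => hz (hker z h)
    obtain ⟨i₀, hi₀⟩ := Function.ne_iff.1 hAz
    apply Finset.sum_pos' (fun i _ => Real.rpow_nonneg (ha i) q)
    refine ⟨i₀, by simp, ?_⟩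
    have : 0 < a i₀ := abs_pos.2 hi₀
    exact Real.rpow_pos_of_pos this q
  · obtain ⟨i₀, hi₀, hmin⟩ := Finset.exists_min_image T' a hne
    set t := a i₀ with ht_def
    have ht0 : 0 < t := by
      rcases lt_or_eq_of_le (ha i₀) with h | h
      · exact h
      · exfalso
        have hzero : ∀ j ∈ T'ᶜ, a j = 0 := by
          intro j hj
          have := hbd i₀ hi₀ j hj
          have := ha j
          linarith [this]
        have : ∑ i ∈ T'ᶜ, a i ^ p = 0 := by
          apply Finset.sum_eq_zero
          intro j hj
          rw [hzero j hj, Real.zero_rpow (ne_of_gt hp0)]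
        rw [this] at hNSP'
        have : 0 ≤ ∑ i ∈ T', a i ^ p :=
          Finset.sum_nonneg fun i _ => Real.rpow_nonneg (ha i) p
        linarith
    have htpow : 0 < t ^ (q - p) := Real.rpow_pos_of_pos ht0 _
    calc ∑ i ∈ T', a i ^ q ≤ ∑ i ∈ T', a i ^ p * t ^ (q - p) := by
          apply Finset.sum_le_sum
          intro i hi
          have hti : t ≤ a i := hmin i hi
          have hai : 0 < a i := lt_of_lt_of_le ht0 hti
          have heq : a i ^ q = a i ^ p * a i ^ (q - p) := by
            rw [← Real.rpow_add hai]; ring_nf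
          rw [heq]
          exact mul_le_mul_of_nonneg_left
            (Real.rpow_le_rpow_of_nonpos ht0 hti (by linarith)) (Real.rpow_nonneg (ha i) p)
      _ = (∑ i ∈ T', a i ^ p) * t ^ (q - p) := by rw [← Finset.sum_mul]
      _ < (∑ i ∈ T'ᶜ, a i ^ p) * t ^ (q - p) := by
          exact mul_lt_mul_of_pos_right hNSP' htpow
      _ = ∑ i ∈ T'ᶜ, a i ^ p * t ^ (q - p) := by rw [← Finset.sum_mul]
      _ ≤ ∑ i ∈ T'ᶜ, a i ^ q := by
          apply Finset.sum_le_sum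
          intro j hj
          rcases eq_or_lt_of_le (ha j) with h | h
          · rw [← h, Real.zero_rpow (ne_of_gt hp0), Real.zero_rpow (ne_of_gt hq0), zero_mul]
          · have hjt : a j ≤ t := hbd i₀ hi₀ j hj
            have heq : a j ^ q = a j ^ p * a j ^ (q - p) := by
              rw [← Real.rpow_add h]; ring_nf
            rw [heq]
            exact mul_le_mul_of_nonneg_left
              (Real.rpow_le_rpow_of_nonpos h hjt (by linarith)) (Real.rpow_nonneg (ha j) p)
end

section
/- For p ∈ (0,1], let z*(p) > 0 be the unique solution of ∫_0^{z*} x^p f(x) dx = ∫_{z*}^∞ x^p f(x) dx, where f is the density of |X| with X ~ N(0,1), and define ρ*(p) = 1 − F(z*(p)) with F the c.d.f. of |X|. Then ρ* is strictly decreasing on (0,1]. -/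
open MeasureTheory Set
open scoped ENNReal

/-- Density of `|X|` for `X` standard Gaussian. -/
noncomputable def halfGaussianPdf (z : ℝ) : ℝ :=
  Real.sqrt (2 / Real.pi) * Real.exp (-z ^ 2 / 2)

/-- C.d.f. of `|X|` for `X` standard Gaussian. -/
noncomputable def halfGaussianCdf (x : ℝ) : ℝ :=
  ∫ t in (0:ℝ)..x, halfGaussianPdf t

lemma hg_pos (z : ℝ) : 0 < halfGaussianPdf z := by
  apply mul_pos _ (Real.exp_pos _)
  apply Real.sqrt_pos.2
  positivity

lemma hg_cont : Continuous halfGaussianPdf := by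
  unfold halfGaussianPdf
  continuity

lemma integrable_mom (p : ℝ) (hp : 0 < p) :
    IntegrableOn (fun x => x ^ p * halfGaussianPdf x) (Ioi (0:ℝ)) := by
  have h := (integrableOn_rpow_mul_exp_neg_mul_sq (b := 1/2) (by norm_num)
      (s := p) (by linarith)).const_mul (Real.sqrt (2 / Real.pi))
  apply h.congr
  filter_upwards with x
  unfold halfGaussianPdf
  ring_nf

lemma integrable_mom' (p z : ℝ) (hp : 0 < p) (hz : 0 < z) :
    IntegrableOn (fun x => x ^ p * halfGaussianPdf x) (Ioi z) :=
  (integrable_mom p hp).mono_set (Ioi_subset_Ioi hz.le)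

lemma key (p q z : ℝ) (hp : 0 < p) (hpq : p < q) (hz : 0 < z)
    (Hp : ∫ x in (0:ℝ)..z, x ^ p * halfGaussianPdf x
        = ∫ x in Ioi z, x ^ p * halfGaussianPdf x) :
    (∫ x in (0:ℝ)..z, x ^ q * halfGaussianPdf x)
      < ∫ x in Ioi z, x ^ q * halfGaussianPdf x := by
  have hq : 0 < q := hp.trans hpq
  have hIp : IntegrableOn (fun x => x ^ p * halfGaussianPdf x) (Ioc 0 z) :=
    (integrable_mom p hp).mono_set Ioc_subset_Ioi_self
  have hIq : IntegrableOn (fun x => x ^ q * halfGaussianPdf x) (Ioc 0 z) :=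
    (integrable_mom q hq).mono_set Ioc_subset_Ioi_self
  have hIp' : IntegrableOn (fun x => x ^ p * halfGaussianPdf x) (Ioi z) :=
    integrable_mom' p z hp hz
  have hIq' : IntegrableOn (fun x => x ^ q * halfGaussianPdf x) (Ioi z) :=
    integrable_mom' q z hq hz
  rw [intervalIntegral.integral_of_le hz.le] at Hp ⊢
  -- step 1
  have step1 : (∫ x in Ioc (0:ℝ) z, x ^ q * halfGaussianPdf x)
      ≤ z ^ (q - p) * ∫ x in Ioc (0:ℝ) z, x ^ p * halfGaussianPdf x := by
    rw [← integral_const_mul]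
    apply setIntegral_mono_on hIq (hIp.const_mul _) measurableSet_Ioc
    intro x hx
    have hx0 : 0 < x := hx.1
    have : x ^ q = x ^ (q - p) * x ^ p := by
      rw [← Real.rpow_add hx0]; ring_nf
    rw [this, mul_assoc]
    apply mul_le_mul_of_nonneg_right _ (mul_pos (Real.rpow_pos_of_pos hx0 p) (hg_pos x)).le
    exact Real.rpow_le_rpow hx0.le hx.2 (by linarith)
  -- step 2
  have step2 : z ^ (q - p) * (∫ x in Ioi z, x ^ p * halfGaussianPdf x)
      < ∫ x in Ioi z, x ^ q * halfGaussianPdf x := by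
    rw [← sub_pos, ← integral_const_mul,
      ← integral_sub hIq' (hIp'.const_mul _)]
    set d := fun x => x ^ q * halfGaussianPdf x - z ^ (q - p) * (x ^ p * halfGaussianPdf x)
      with hd
    have hdpos : ∀ x ∈ Ioi z, 0 < d x := by
      intro x hx
      have hxz : z < x := hx
      have h1 : z ^ (q - p) < x ^ (q - p) :=
        Real.rpow_lt_rpow hz.le hxz (by linarith)
      have h2 : x ^ q = x ^ (q - p) * x ^ p := by
        rw [← Real.rpow_add (hz.trans hxz)]; ring_nf
      have := hg_pos x
      have hxp : (0:ℝ) < x ^ p := Real.rpow_pos_of_pos (hz.trans hxz) p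
      simp only [hd, h2]
      nlinarith [mul_lt_mul_of_pos_right h1 (mul_pos hxp this)]
    have hdint : IntegrableOn d (Ioi z) := hIq'.sub (hIp'.const_mul _)
    rw [setIntegral_pos_iff_support_of_nonneg_ae ?_ hdint]
    · have hsub : Ioi z ⊆ Function.support d ∩ Ioi z := fun x hx =>
        ⟨ne_of_gt (hdpos x hx), hx⟩
      calc (0:ℝ≥0∞) < volume (Ioi z) := by simp
        _ ≤ volume (Function.support d ∩ Ioi z) := measure_mono hsub
    · filter_upwards [ae_restrict_mem measurableSet_Ioi] with x hx
      exact (hdpos x hx).le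
  rw [Hp] at step1
  exact step1.trans_lt step2

theorem stmt_9 (zstar : ℝ → ℝ)
    (hzstar : ∀ p ∈ Set.Ioc (0:ℝ) 1, 0 < zstar p ∧
      ∫ x in (0:ℝ)..(zstar p), x ^ p * halfGaussianPdf x =
        ∫ x in Set.Ioi (zstar p), x ^ p * halfGaussianPdf x) :
    StrictAntiOn (fun p => 1 - halfGaussianCdf (zstar p)) (Set.Ioc (0:ℝ) 1) := by
  intro p hp q hq hpq
  obtain ⟨hzp, Hp⟩ := hzstar p hp
  obtain ⟨hzq, Hq⟩ := hzstar q hq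
  have hp0 : 0 < p := hp.1
  have hq0 : 0 < q := hq.1
  -- zstar p < zstar q
  have hzpq : zstar p < zstar q := by
    by_contra h
    push_neg at h  -- zstar q ≤ zstar p
    have key' := key p q (zstar p) hp0 hpq hzp Hp
    have m1 : (∫ x in (0:ℝ)..(zstar q), x ^ q * halfGaussianPdf x)
        ≤ ∫ x in (0:ℝ)..(zstar p), x ^ q * halfGaussianPdf x := by
      rw [intervalIntegral.integral_of_le hzq.le, intervalIntegral.integral_of_le hzp.le]
      apply setIntegral_mono_set
        ((integrable_mom q hq0).mono_set Set.Ioc_subset_Ioi_self)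
      · filter_upwards [ae_restrict_mem measurableSet_Ioc] with x hx
        exact (mul_pos (Real.rpow_pos_of_pos hx.1 q) (hg_pos x)).le
      · exact (HasSubset.Subset.eventuallyLE (Set.Ioc_subset_Ioc_right h)).mono fun x => id
    have m2 : (∫ x in Set.Ioi (zstar p), x ^ q * halfGaussianPdf x)
        ≤ ∫ x in Set.Ioi (zstar q), x ^ q * halfGaussianPdf x := by
      apply setIntegral_mono_set (integrable_mom' q (zstar q) hq0 hzq)
      · filter_upwards [ae_restrict_mem measurableSet_Ioi] with x hx
        exact (mul_pos (Real.rpow_pos_of_pos (hzq.trans hx) q) (hg_pos x)).le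
      · exact (HasSubset.Subset.eventuallyLE (Set.Ioi_subset_Ioi h)).mono fun x => id
    have : (∫ x in Set.Ioi (zstar q), x ^ q * halfGaussianPdf x)
        < ∫ x in Set.Ioi (zstar q), x ^ q * halfGaussianPdf x :=
      calc (∫ x in Set.Ioi (zstar q), x ^ q * halfGaussianPdf x)
          = ∫ x in (0:ℝ)..(zstar q), x ^ q * halfGaussianPdf x := Hq.symm
        _ ≤ ∫ x in (0:ℝ)..(zstar p), x ^ q * halfGaussianPdf x := m1
        _ < ∫ x in Set.Ioi (zstar p), x ^ q * halfGaussianPdf x := key'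
        _ ≤ _ := m2
    exact lt_irrefl _ this
  -- F strictly increasing
  have hF : halfGaussianCdf (zstar p) < halfGaussianCdf (zstar q) := by
    have hsplit : halfGaussianCdf (zstar q)
        = halfGaussianCdf (zstar p) + ∫ t in (zstar p)..(zstar q), halfGaussianPdf t := by
      unfold halfGaussianCdf
      rw [intervalIntegral.integral_add_adjacent_intervals
        (hg_cont.intervalIntegrable _ _) (hg_cont.intervalIntegrable _ _)]
    have hpos : 0 < ∫ t in (zstar p)..(zstar q), halfGaussianPdf t :=
      intervalIntegral.intervalIntegral_pos_of_pos (hg_cont.intervalIntegrable _ _)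
        (fun x => hg_pos x) hzpq
    linarith
  simp only
  linarith
end

section
/- Let 0 < p < 1, A an m×n real matrix, T ⊆ {1,...,m}, and let sign pattern s : T → {−1,+1} be fixed. Suppose there exists z ∈ ℝ^n with ∑_{i∈T, (Az)_i s_i < 0} |(Az)_i|^p > ∑_{i∈T^c} |(Az)_i|^p. Then there exists an error vector e supported on T with sign(e_i) = s_i for i ∈ T such that for some f, f is not a minimizer of x ↦ ∑_i |(Af + e − Ax)_i|^p. -/
theorem stmt_11 (m n : ℕ) (A : Matrix (Fin m) (Fin n) ℝ) (p : ℝ)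
    (hp0 : 0 < p) (hp1 : p < 1) (T : Finset (Fin m)) (s : Fin m → ℝ)
    (hs : ∀ i ∈ T, s i = 1 ∨ s i = -1)
    (z : Fin n → ℝ)
    (hfail : ∑ i ∈ T.filter (fun i => A.mulVec z i * s i < 0), |A.mulVec z i| ^ p >
      ∑ i ∈ Tᶜ, |A.mulVec z i| ^ p) :
    ∃ e : Fin m → ℝ,
      (∀ i ∉ T, e i = 0) ∧ (∀ i ∈ T, Real.sign (e i) = s i) ∧
      ∃ (f : Fin n → ℝ) (x : Fin n → ℝ),
        ∑ i, |A.mulVec f i + e i - A.mulVec x i| ^ p < ∑ i, |e i| ^ p := by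
  classical
  set a : Fin m → ℝ := A.mulVec z with ha
  set Tm : Finset (Fin m) := T.filter (fun i => a i * s i < 0) with hTmdef
  set Tp : Finset (Fin m) := T.filter (fun i => ¬ a i * s i < 0) with hTpdef
  set Sm : ℝ := ∑ i ∈ Tm, |a i| ^ p with hSmdef
  set Sc : ℝ := ∑ i ∈ Tᶜ, |a i| ^ p with hScdef
  have hδ : 0 < Sm - Sc := sub_pos.mpr hfail
  set B : ℝ := ∑ i ∈ Tp, a i * s i with hBdef
  have hB0 : 0 ≤ B := Finset.sum_nonneg fun i hi =>
    le_of_not_gt (Finset.mem_filter.mp hi).2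
  have h1p : (0:ℝ) < 1 - p := by linarith
  set t : ℝ := ((Sm - Sc) / (B + 1)) ^ ((1:ℝ) / (1 - p)) with htdef
  have hbase : 0 < (Sm - Sc) / (B + 1) := div_pos hδ (by linarith)
  have ht : 0 < t := Real.rpow_pos_of_pos hbase _
  have htpow : t ^ (1 - p) = (Sm - Sc) / (B + 1) := by
    rw [htdef, ← Real.rpow_mul hbase.le, one_div, inv_mul_cancel₀ h1p.ne',
      Real.rpow_one]
  set e : Fin m → ℝ := fun i =>
    if i ∈ T then (if a i * s i < 0 then -t * a i else s i) else 0 with hedef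
  refine ⟨e, ?_, ?_, t • z, 0, ?_⟩
  · intro i hi
    simp [hedef, hi]
  · intro i hi
    rcases hs i hi with h1 | h1
    · by_cases hneg : a i * s i < 0
      · have hei : e i = -t * a i := by simp [hedef, hi, hneg]
        have hai : a i < 0 := by nlinarith
        have : 0 < e i := by rw [hei]; nlinarith
        rw [Real.sign_of_pos this, h1]
      · have hei : e i = s i := by simp [hedef, hi, hneg]
        rw [hei, h1, Real.sign_one]
    · by_cases hneg : a i * s i < 0
      · have hei : e i = -t * a i := by simp [hedef, hi, hneg]
        have hai : 0 < a i := by nlinarith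
        have : e i < 0 := by rw [hei]; nlinarith
        rw [Real.sign_of_neg this, h1]
      · have hei : e i = s i := by simp [hedef, hi, hneg]
        rw [hei, h1, Real.sign_of_neg (by norm_num)]
  · have hmv : ∀ i, A.mulVec (t • z) i = t * a i := by
      intro i
      rw [ha, Matrix.mulVec_smul]
      simp
    have hsplit : ∀ F : Fin m → ℝ,
        ∑ i, F i = (∑ i ∈ Tm, F i + ∑ i ∈ Tp, F i) + ∑ i ∈ Tᶜ, F i := by
      intro F
      rw [← Finset.sum_add_sum_compl T F,
        ← Finset.sum_filter_add_sum_filter_not T (fun i => a i * s i < 0) F]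
    simp only [hmv, Matrix.mulVec_zero, Pi.zero_apply, sub_zero]
    rw [hsplit (fun i => |t * a i + e i| ^ p), hsplit (fun i => |e i| ^ p)]
    -- Evaluate each block
    have hLm : ∑ i ∈ Tm, |t * a i + e i| ^ p = 0 := by
      apply Finset.sum_eq_zero
      intro i hi
      obtain ⟨hiT, hlt⟩ := Finset.mem_filter.mp hi
      have hei : e i = -t * a i := by simp [hedef, hiT, hlt]
      rw [hei]
      ring_nf
      simp [Real.zero_rpow hp0.ne']
    have hRm : ∑ i ∈ Tm, |e i| ^ p = t ^ p * Sm := by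
      rw [hSmdef, Finset.mul_sum]
      apply Finset.sum_congr rfl
      intro i hi
      obtain ⟨hiT, hlt⟩ := Finset.mem_filter.mp hi
      have hei : e i = -t * a i := by simp [hedef, hiT, hlt]
      rw [hei, neg_mul, abs_neg, abs_mul, abs_of_pos ht,
        Real.mul_rpow ht.le (abs_nonneg _)]
    have hLc : ∑ i ∈ Tᶜ, |t * a i + e i| ^ p = t ^ p * Sc := by
      rw [hScdef, Finset.mul_sum]
      apply Finset.sum_congr rfl
      intro i hi
      have hiT : i ∉ T := Finset.mem_compl.mp hi
      have hei : e i = 0 := by simp [hedef, hiT]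
      rw [hei, add_zero, abs_mul, abs_of_pos ht,
        Real.mul_rpow ht.le (abs_nonneg _)]
    have hRc : ∑ i ∈ Tᶜ, |e i| ^ p = 0 := by
      apply Finset.sum_eq_zero
      intro i hi
      have hiT : i ∉ T := Finset.mem_compl.mp hi
      have hei : e i = 0 := by simp [hedef, hiT]
      rw [hei, abs_zero, Real.zero_rpow hp0.ne']
    have hRp : ∑ i ∈ Tp, |e i| ^ p = (Tp.card : ℝ) := by
      rw [Finset.card_eq_sum_ones, Nat.cast_sum]
      apply Finset.sum_congr rfl
      intro i hi
      obtain ⟨hiT, hlt⟩ := Finset.mem_filter.mp hi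
      have hei : e i = s i := by simp [hedef, hiT, hlt]
      have hab : |s i| = 1 := by rcases hs i hiT with h1 | h1 <;> simp [h1]
      rw [hei, hab, Real.one_rpow, Nat.cast_one]
    have hLp : ∑ i ∈ Tp, |t * a i + e i| ^ p ≤ (Tp.card : ℝ) + t * B := by
      rw [hBdef, Finset.mul_sum, Finset.card_eq_sum_ones, Nat.cast_sum,
        ← Finset.sum_add_distrib]
      apply Finset.sum_le_sum
      intro i hi
      obtain ⟨hiT, hlt⟩ := Finset.mem_filter.mp hi
      have hb : 0 ≤ a i * s i := le_of_not_gt hlt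
      have hei : e i = s i := by simp [hedef, hiT, hlt]
      have hss : s i * s i = 1 := by rcases hs i hiT with h1 | h1 <;> simp [h1]
      have hab : |s i| = 1 := by rcases hs i hiT with h1 | h1 <;> simp [h1]
      have hfact : t * a i + e i = s i * (1 + t * (a i * s i)) := by
        rw [hei]; linear_combination (-(t * a i)) * hss
      have hpos : (1:ℝ) ≤ 1 + t * (a i * s i) := by nlinarith
      have habs : |t * a i + e i| = 1 + t * (a i * s i) := by
        rw [hfact, abs_mul, hab, one_mul, abs_of_pos (by linarith)]
      rw [habs]
      calc (1 + t * (a i * s i)) ^ p ≤ (1 + t * (a i * s i)) ^ (1:ℝ) :=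
            Real.rpow_le_rpow_of_exponent_le hpos hp1.le
        _ = 1 + t * (a i * s i) := Real.rpow_one _
        _ = Nat.cast 1 + t * (a i * s i) := by norm_num
    rw [hLm, hLc, hRm, hRc]
    have htB : t * B < t ^ p * (Sm - Sc) := by
      have ht1 : t ^ p * t ^ (1 - p) = t := by
        rw [← Real.rpow_add ht]
        norm_num
      have hlt : (Sm - Sc) / (B + 1) * B < Sm - Sc := by
        rw [div_mul_eq_mul_div, div_lt_iff₀ (by linarith : (0:ℝ) < B + 1)]
        nlinarith
      calc t * B = t ^ p * (t ^ (1 - p) * B) := by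
            rw [← mul_assoc, ht1]
        _ = t ^ p * ((Sm - Sc) / (B + 1) * B) := by rw [htpow]
        _ < t ^ p * (Sm - Sc) :=
            mul_lt_mul_of_pos_left hlt (Real.rpow_pos_of_pos ht p)
    linarith
end

section
/- Let 0 < p < 1, A an m×n real matrix with trivial kernel, T ⊆ {1,...,m}, and e ∈ ℝ^m supported on T. If for all nonzero z ∈ ℝ^n we have ∑_{i ∈ T : (Az)_i e_i < 0} |(Az)_i|^p < ∑_{i ∈ T^c} |(Az)_i|^p, then for every f ∈ ℝ^n, f is the unique minimizer of x ↦ ∑_{i=1}^m |(Af + e − Ax)_i|^p. -/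
private lemma rpow_subadd {p : ℝ} (hp : 0 ≤ p) (hp1 : p ≤ 1) (a b : ℝ)
    (ha : 0 ≤ a) (hb : 0 ≤ b) : (a + b) ^ p ≤ a ^ p + b ^ p := by
  have h := NNReal.rpow_add_le_add_rpow a.toNNReal b.toNNReal hp hp1
  rw [← Real.toNNReal_add ha hb] at h
  have h2 := NNReal.coe_le_coe.2 h
  simpa [NNReal.coe_rpow, Real.coe_toNNReal _ ha, Real.coe_toNNReal _ hb,
    Real.coe_toNNReal _ (add_nonneg ha hb)] using h2

private lemma abs_le_abs_add_of_mul_nonneg {a b : ℝ} (h : 0 ≤ a * b) :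
    |b| ≤ |a + b| := by
  rcases abs_cases (a + b) with ⟨h1, h2⟩ | ⟨h1, h2⟩ <;>
    rcases abs_cases b with ⟨h3, h4⟩ | ⟨h3, h4⟩ <;> nlinarith

theorem stmt_12 (m n : ℕ) (A : Matrix (Fin m) (Fin n) ℝ) (p : ℝ)
    (hp0 : 0 < p) (hp1 : p < 1)
    (hker : ∀ z : Fin n → ℝ, A.mulVec z = 0 → z = 0)
    (T : Finset (Fin m)) (e : Fin m → ℝ) (hsupp : ∀ i ∉ T, e i = 0)
    (hNSP : ∀ z : Fin n → ℝ, z ≠ 0 →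
      ∑ i ∈ T.filter (fun i => A.mulVec z i * e i < 0), |A.mulVec z i| ^ p <
        ∑ i ∈ Tᶜ, |A.mulVec z i| ^ p) :
    ∀ (f : Fin n → ℝ) (x : Fin n → ℝ), x ≠ f →
      ∑ i, |e i| ^ p < ∑ i, |A.mulVec f i + e i - A.mulVec x i| ^ p := by
  intro f x hxf
  set z : Fin n → ℝ := f - x with hz
  have hzne : z ≠ 0 := by
    intro h
    apply hxf
    have : f - x = 0 := h
    have := sub_eq_zero.mp this
    exact this.symm
  set w : Fin m → ℝ := A.mulVec z with hw
  have hwe : ∀ i, A.mulVec f i + e i - A.mulVec x i = w i + e i := by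
    intro i
    simp [hw, hz, Matrix.mulVec_sub]
    ring
  have hNSP' := hNSP z hzne
  -- rewrite goal
  simp only [hwe]
  -- LHS sum equals sum over T
  have hL : ∑ i, |e i| ^ p = ∑ i ∈ T, |e i| ^ p := by
    rw [← Finset.sum_subset (Finset.subset_univ T)]
    intro i _ hi
    rw [hsupp i hi, abs_zero, Real.zero_rpow hp0.ne']
  -- split RHS over T and Tᶜ
  have hR : ∑ i, |w i + e i| ^ p =
      ∑ i ∈ T, |w i + e i| ^ p + ∑ i ∈ Tᶜ, |w i| ^ p := by
    rw [← Finset.sum_add_sum_compl T]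
    congr 1
    apply Finset.sum_congr rfl
    intro i hi
    rw [hsupp i (by simpa using hi), add_zero]
  rw [hL, hR]
  set B : Finset (Fin m) := T.filter (fun i => w i * e i < 0) with hB
  have hBsub : B ⊆ T := Finset.filter_subset _ _
  -- pointwise bounds
  have key : ∑ i ∈ T, |e i| ^ p - ∑ i ∈ B, |w i| ^ p ≤ ∑ i ∈ T, |w i + e i| ^ p := by
    have hsplit1 : ∑ i ∈ T, |e i| ^ p =
        ∑ i ∈ B, |e i| ^ p + ∑ i ∈ T \ B, |e i| ^ p :=
      by rw [← Finset.sum_sdiff hBsub]; ring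
    have hsplit2 : ∑ i ∈ T, |w i + e i| ^ p =
        ∑ i ∈ B, |w i + e i| ^ p + ∑ i ∈ T \ B, |w i + e i| ^ p := by
      rw [← Finset.sum_sdiff hBsub]; ring
    rw [hsplit1, hsplit2]
    have h1 : ∑ i ∈ B, |e i| ^ p - ∑ i ∈ B, |w i| ^ p ≤ ∑ i ∈ B, |w i + e i| ^ p := by
      rw [← Finset.sum_sub_distrib]
      apply Finset.sum_le_sum
      intro i _
      have hle : |e i| ≤ |w i + e i| + |w i| := by
        have := abs_add_le (w i + e i) (-(w i))
        simpa using this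
      have h2 : |e i| ^ p ≤ (|w i + e i| + |w i|) ^ p :=
        Real.rpow_le_rpow (abs_nonneg _) hle hp0.le
      have h3 : (|w i + e i| + |w i|) ^ p ≤ |w i + e i| ^ p + |w i| ^ p :=
        rpow_subadd hp0.le hp1.le _ _ (abs_nonneg _) (abs_nonneg _)
      linarith
    have h2 : ∑ i ∈ T \ B, |e i| ^ p ≤ ∑ i ∈ T \ B, |w i + e i| ^ p := by
      apply Finset.sum_le_sum
      intro i hi
      have hge : 0 ≤ w i * e i := by
        by_contra h
        push_neg at h
        exact (Finset.mem_sdiff.mp hi).2 (Finset.mem_filter.mpr ⟨(Finset.mem_sdiff.mp hi).1, h⟩)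
      exact Real.rpow_le_rpow (abs_nonneg _) (abs_le_abs_add_of_mul_nonneg hge) hp0.le
    linarith
  calc ∑ i ∈ T, |e i| ^ p
      < ∑ i ∈ T, |e i| ^ p - ∑ i ∈ B, |w i| ^ p + ∑ i ∈ Tᶜ, |w i| ^ p := by
        linarith [hNSP']
    _ ≤ ∑ i ∈ T, |w i + e i| ^ p + ∑ i ∈ Tᶜ, |w i| ^ p := by linarith
end
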